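/- In the amplitude-damping setup of the context, the quantities β₂ = ∑_{μ,ν} Tr(R_μ R_ν)·Tr(R_μ)·Tr(R_ν), β₃ = ∑_{μ,ν} Tr(R_μ R_ν²)·Tr(R_μ), and β₄ = ∑_{μ,ν} Tr(R_μ² R_ν²) satisfy β₂ = α₁² / d_S, β₃ = α₁·α₂ / d_S, and β₄ = α₂² / d_S, where d_S = C(N,K), α₁ = ∑_μ (Tr R_μ)² and α₂ = ∑_μ Tr(R_μ²). -/

import Mathlib

open Matrix Finset

/-- Amplitude-damping Kraus operator K₁ = |−⟩⟨−| + √(1−r)|+⟩⟨+| on C², where the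
basis index 0 is |−⟩ and 1 is |+⟩. -/
noncomputable def ampK1 (r : ℝ) : Matrix (Fin 2) (Fin 2) ℂ :=
  !![1, 0; 0, (Real.sqrt (1 - r) : ℂ)]

/-- Amplitude-damping Kraus operator K₂ = √r |−⟩⟨+|. -/
noncomputable def ampK2 (r : ℝ) : Matrix (Fin 2) (Fin 2) ℂ :=
  !![0, (Real.sqrt r : ℂ); 0, 0]

/-- The rescaled Pauli matrices σ₀ = (|+⟩⟨+|+|−⟩⟨−|)/√2, σ₁ = (|+⟩⟨−|+|−⟩⟨+|)/√2,
σ₂ = i(−|+⟩⟨−|+|−⟩⟨+|)/√2, σ₃ = (|+⟩⟨+|−|−⟩⟨−|)/√2, with basis index 0 = |−⟩, 1 = |+⟩. -/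
noncomputable def pauliR : Fin 4 → Matrix (Fin 2) (Fin 2) ℂ
  | 0 => ((Real.sqrt 2 : ℂ))⁻¹ • !![1, 0; 0, 1]
  | 1 => ((Real.sqrt 2 : ℂ))⁻¹ • !![0, 1; 1, 0]
  | 2 => ((Real.sqrt 2 : ℂ))⁻¹ • !![0, Complex.I; -Complex.I, 0]
  | 3 => ((Real.sqrt 2 : ℂ))⁻¹ • !![-1, 0; 0, 1]

/-- The single-qubit operators Q_a = ∑_{i=1,2} K_i† σ_a K_i for the
amplitude-damping channel. -/
noncomputable def ampQ (r : ℝ) (a : Fin 4) : Matrix (Fin 2) (Fin 2) ℂ :=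
  (ampK1 r)ᴴ * pauliR a * ampK1 r + (ampK2 r)ᴴ * pauliR a * ampK2 r

/-- The N-qubit operator Q_μ = ⊗_{n=1}^N Q_{μ(n)} (N-fold Kronecker product). -/
noncomputable def ampQN (r : ℝ) (N : ℕ) (μ : Fin N → Fin 4) :
    Matrix (Fin N → Fin 2) (Fin N → Fin 2) ℂ :=
  Matrix.of fun x y => ∏ n, ampQ r (μ n) (x n) (y n)

/-- The orthogonal projection onto the energy shell: the span of the standard
tensor-product basis vectors having exactly K factors equal to |+⟩. -/
noncomputable def shellP (N Kp : ℕ) : Matrix (Fin N → Fin 2) (Fin N → Fin 2) ℂ :=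
  Matrix.of fun x y =>
    if x = y ∧ (Finset.univ.filter fun n => x n = 1).card = Kp then 1 else 0

/-- R_μ = P Q_μ P for the amplitude-damping setup. -/
noncomputable def ampR (r : ℝ) (N Kp : ℕ) (μ : Fin N → Fin 4) :
    Matrix (Fin N → Fin 2) (Fin N → Fin 2) ℂ :=
  shellP N Kp * ampQN r N μ * shellP N Kp

/-- Real part of the trace. -/
noncomputable def rtr {α : Type} [Fintype α] (M : Matrix α α ℂ) : ℝ :=
  (Matrix.trace M).re

noncomputable def dd (r : ℝ) : Fin 2 → ℝ := ![(-1 : ℝ), 1 - 2*r]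

lemma sumA (r : ℝ) (hr0 : 0 ≤ r) (hr1 : r ≤ 1) (z x y : Fin 2) :
    ∑ a : Fin 4, ampQ r a z z * ampQ r a x y
      = if x = y then (((1 + dd r z * dd r x)/2 : ℝ) : ℂ) else 0 := by
  have h2 : (Real.sqrt 2 : ℂ) ≠ 0 := by norm_cast; positivity
  have hs2 : (Real.sqrt (1-r) : ℂ)^2 = ((1:ℂ) - r) := by
    norm_cast; exact_mod_cast Real.sq_sqrt (by linarith)
  have hq2 : (Real.sqrt r : ℂ)^2 = (r:ℂ) := by
    norm_cast; exact_mod_cast Real.sq_sqrt hr0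
  have h22 : (Real.sqrt 2 : ℂ)^2 = 2 := by
    norm_cast; exact_mod_cast Real.sq_sqrt (by norm_num : (0:ℝ) ≤ 2)
  have hs4 : (Real.sqrt (1-r) : ℂ)^4 = ((1:ℂ) - r)^2 := by
    rw [show (4:ℕ) = 2*2 from rfl, pow_mul, hs2]
  have hq4 : (Real.sqrt r : ℂ)^4 = (r:ℂ)^2 := by
    rw [show (4:ℕ) = 2*2 from rfl, pow_mul, hq2]
  fin_cases z <;> fin_cases x <;> fin_cases y <;>
    simp [Fin.sum_univ_four, ampQ, ampK1, ampK2, pauliR, Matrix.mul_apply,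
      Fin.sum_univ_two, Matrix.conjTranspose_apply, dd] <;>
    field_simp <;> ring_nf <;>
    simp [hs2, hq2, h22, hs4, hq4] <;> ring

noncomputable def gg (r : ℝ) (x z : Fin 2) : ℝ :=
  if x = z then (1 + (dd r x)^2)/2 else 1 - r

lemma sumB (r : ℝ) (hr0 : 0 ≤ r) (hr1 : r ≤ 1) (x z y : Fin 2) :
    ∑ a : Fin 4, ampQ r a x z * ampQ r a z y
      = if x = y then ((gg r x z : ℝ) : ℂ) else 0 := by
  have h2 : (Real.sqrt 2 : ℂ) ≠ 0 := by norm_cast; positivity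
  have hs2 : (Real.sqrt (1-r) : ℂ)^2 = ((1:ℂ) - r) := by
    norm_cast; exact_mod_cast Real.sq_sqrt (by linarith)
  have hq2 : (Real.sqrt r : ℂ)^2 = (r:ℂ) := by
    norm_cast; exact_mod_cast Real.sq_sqrt hr0
  have h22 : (Real.sqrt 2 : ℂ)^2 = 2 := by
    norm_cast; exact_mod_cast Real.sq_sqrt (by norm_num : (0:ℝ) ≤ 2)
  have hs4 : (Real.sqrt (1-r) : ℂ)^4 = ((1:ℂ) - r)^2 := by
    rw [show (4:ℕ) = 2*2 from rfl, pow_mul, hs2]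
  have hq4 : (Real.sqrt r : ℂ)^4 = (r:ℂ)^2 := by
    rw [show (4:ℕ) = 2*2 from rfl, pow_mul, hq2]
  fin_cases x <;> fin_cases z <;> fin_cases y <;>
    simp [Fin.sum_univ_four, ampQ, ampK1, ampK2, pauliR, Matrix.mul_apply,
      Fin.sum_univ_two, Matrix.conjTranspose_apply, dd, gg] <;>
    field_simp <;> ring_nf <;>
    simp [hs2, hq2, h22, hs4, hq4] <;> ring

noncomputable def qdiag (r : ℝ) (a : Fin 4) (x : Fin 2) : ℝ :=
  (Real.sqrt 2)⁻¹ * (if a = 0 then 1 else if a = 3 then dd r x else 0)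

lemma ampQ_diag (r : ℝ) (hr0 : 0 ≤ r) (hr1 : r ≤ 1) (a : Fin 4) (x : Fin 2) :
    ampQ r a x x = ((qdiag r a x : ℝ) : ℂ) := by
  have hs2 : (Real.sqrt (1-r) : ℂ)^2 = ((1:ℂ) - r) := by
    norm_cast; exact_mod_cast Real.sq_sqrt (by linarith)
  have hq2 : (Real.sqrt r : ℂ)^2 = (r:ℂ) := by
    norm_cast; exact_mod_cast Real.sq_sqrt hr0
  fin_cases a <;> fin_cases x <;>
    simp [ampQ, ampK1, ampK2, pauliR, Matrix.mul_apply,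
      Fin.sum_univ_two, Matrix.conjTranspose_apply, dd, qdiag] <;>
    ring_nf <;> simp [hs2, hq2] <;> push_cast <;> ring

variable {N Kp : ℕ}

def cnt {N : ℕ} (x : Fin N → Fin 2) : ℕ := (Finset.univ.filter fun n => x n = 1).card

lemma card_shell (N Kp : ℕ) :
    (Finset.univ.filter fun x : Fin N → Fin 2 => cnt x = Kp).card = N.choose Kp := by
  have : (Finset.univ.filter fun x : Fin N → Fin 2 => cnt x = Kp).card
      = (Finset.powersetCard Kp (Finset.univ : Finset (Fin N))).card := by
    apply Finset.card_bij (fun x _ => Finset.univ.filter fun n => x n = 1)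
    · intro x hx
      simp only [Finset.mem_filter, Finset.mem_univ, true_and, cnt] at hx
      simp [Finset.mem_powersetCard, hx]
      exact (Finset.mem_filter.1 hx).2
    · intro x hx y hy h
      funext n
      have h2 := Finset.ext_iff.1 h n
      simp only [Finset.mem_filter, Finset.mem_univ, true_and] at h2
      have hb1 := (x n).isLt
      have hb2 := (y n).isLt
      rw [Fin.ext_iff] at h2 ⊢
      rw [show ((1 : Fin 2) : ℕ) = 1 from rfl] at h2
      omega
    · intro s hs
      rw [Finset.mem_powersetCard] at hs
      refine ⟨fun n => if n ∈ s then 1 else 0, ?_, ?_⟩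
      · simp only [Finset.mem_filter, Finset.mem_univ, true_and, cnt]
        have h3 : (Finset.univ.filter fun n => (if n ∈ s then (1:Fin 2) else 0) = 1) = s := by
          ext n; simp only [Finset.mem_filter, Finset.mem_univ, true_and]
          split <;> simp_all
        refine Finset.mem_filter.2 ⟨Finset.mem_univ _, ?_⟩
        exact (congrArg Finset.card h3).trans hs.2
      · ext n; simp only [Finset.mem_filter, Finset.mem_univ, true_and]
        split <;> simp_all
  rw [this, Finset.card_powersetCard, Finset.card_univ, Fintype.card_fin]

lemma exists_perm (x x' : Fin N → Fin 2) (h : cnt x = cnt x') :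
    ∃ σ : Equiv.Perm (Fin N), ∀ n, x (σ n) = x' n := by
  classical
  have c1 : Fintype.card {n // x' n = 1} = Fintype.card {n // x n = 1} := by
    simp only [Fintype.card_subtype]; exact h.symm
  have c0 : Fintype.card {n // ¬ x' n = 1} = Fintype.card {n // ¬ x n = 1} := by
    rw [Fintype.card_subtype_compl, Fintype.card_subtype_compl, c1]
  refine ⟨Equiv.subtypeCongr (Fintype.equivOfCardEq c1) (Fintype.equivOfCardEq c0), ?_⟩
  intro n
  by_cases hn : x' n = 1
  · have : Equiv.subtypeCongr (Fintype.equivOfCardEq c1) (Fintype.equivOfCardEq c0) n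
        = ((Fintype.equivOfCardEq c1) ⟨n, hn⟩ : Fin N) := by
      simp [Equiv.subtypeCongr, hn]
    rw [this, ((Fintype.equivOfCardEq c1) ⟨n, hn⟩).2, hn]
  · have heq : Equiv.subtypeCongr (Fintype.equivOfCardEq c1) (Fintype.equivOfCardEq c0) n
        = ((Fintype.equivOfCardEq c0) ⟨n, hn⟩ : Fin N) := by
      simp [Equiv.subtypeCongr, hn]
    rw [heq]
    have h1 := ((Fintype.equivOfCardEq c0) ⟨n, hn⟩).2
    have hb1 := (x ((Fintype.equivOfCardEq c0) ⟨n, hn⟩ : Fin N)).isLt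
    have hb2 := (x' n).isLt
    rw [Fin.ext_iff] at h1 hn ⊢
    rw [show ((1 : Fin 2) : ℕ) = 1 from rfl] at h1 hn
    omega

lemma cnt_comp_perm (σ : Equiv.Perm (Fin N)) (y : Fin N → Fin 2) :
    cnt (fun n => y (σ n)) = cnt y := by
  unfold cnt
  apply Finset.card_bij (fun n _ => σ n)
  · intro n hn; simpa using (by simpa using hn : y (σ n) = 1)
  · intro a _ b _ hab; exact σ.injective hab
  · intro b hb; exact ⟨σ.symm b, by simpa using hb, by simp⟩

lemma const_on_shell (F : Fin 2 → Fin 2 → ℝ) (x x' : Fin N → Fin 2)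
    (hx : cnt x = Kp) (hx' : cnt x' = Kp) :
    ∑ z ∈ Finset.univ.filter (fun z : Fin N → Fin 2 => cnt z = Kp), ∏ n, F (z n) (x n)
    = ∑ z ∈ Finset.univ.filter (fun z : Fin N → Fin 2 => cnt z = Kp), ∏ n, F (z n) (x' n) := by
  classical
  obtain ⟨σ, hσ⟩ := exists_perm x x' (hx.trans hx'.symm)
  rw [Finset.sum_filter, Finset.sum_filter]
  refine (Fintype.sum_equiv (Equiv.arrowCongr σ (Equiv.refl (Fin 2))) _ _ ?_).symm
  intro z
  have happ : ∀ n, ((Equiv.arrowCongr σ (Equiv.refl (Fin 2))) z) n = z (σ.symm n) := by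
    intro n; simp [Equiv.arrowCongr]
  have hz : cnt ((Equiv.arrowCongr σ (Equiv.refl (Fin 2))) z) = cnt z := by
    have := cnt_comp_perm σ.symm z
    rw [← this]
    congr 1
  rw [hz]
  have hprod : ∏ n, F (((Equiv.arrowCongr σ (Equiv.refl (Fin 2))) z) n) (x n)
      = ∏ n, F (z n) (x' n) := by
    rw [Finset.prod_congr rfl (fun n (_ : n ∈ Finset.univ) =>
      (by rw [happ n] : F (((Equiv.arrowCongr σ (Equiv.refl (Fin 2))) z) n) (x n)
        = (fun m => F (z (σ.symm m)) (x m)) n))]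
    rw [← Equiv.prod_comp σ (fun m => F (z (σ.symm m)) (x m))]
    simp only [Equiv.symm_apply_apply]
    exact Finset.prod_congr rfl fun n _ => by rw [hσ n]
  rw [hprod]


-- the shell as a finset
noncomputable def Sh (N Kp : ℕ) : Finset (Fin N → Fin 2) :=
  Finset.univ.filter fun x => cnt x = Kp

lemma shellP_eq_diagonal (N Kp : ℕ) :
    shellP N Kp = Matrix.diagonal (fun x => if cnt x = Kp then (1:ℂ) else 0) := by
  ext x y
  simp only [shellP, Matrix.of_apply, Matrix.diagonal_apply, cnt]
  by_cases h : x = y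
  · subst h; simp; exact if_congr Iff.rfl rfl rfl
  · simp [h]

lemma ampR_apply (r : ℝ) (N Kp : ℕ) (μ : Fin N → Fin 4) (x y : Fin N → Fin 2) :
    ampR r N Kp μ x y = if cnt x = Kp ∧ cnt y = Kp
      then ∏ n, ampQ r (μ n) (x n) (y n) else 0 := by
  rw [ampR, shellP_eq_diagonal, Matrix.mul_diagonal, Matrix.diagonal_mul]
  show (if cnt x = Kp then (1:ℂ) else 0) * (∏ n, ampQ r (μ n) (x n) (y n))
      * (if cnt y = Kp then (1:ℂ) else 0) = _
  split_ifs with h1 h2 h2 <;> simp_all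

lemma trace_ampR (r : ℝ) (N Kp : ℕ) (μ : Fin N → Fin 4) :
    Matrix.trace (ampR r N Kp μ) = ∑ x ∈ Sh N Kp, ∏ n, ampQ r (μ n) (x n) (x n) := by
  rw [Matrix.trace, Sh, Finset.sum_filter]
  apply Finset.sum_congr rfl
  intro x _
  rw [Matrix.diag_apply, ampR_apply]
  simp

lemma trace_shellP (N Kp : ℕ) :
    Matrix.trace (shellP N Kp) = ((N.choose Kp : ℝ) : ℂ) := by
  rw [Matrix.trace]
  have : ∀ x : Fin N → Fin 2, (shellP N Kp).diag x = if cnt x = Kp then (1:ℂ) else 0 := by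
    intro x; rw [Matrix.diag_apply, shellP_eq_diagonal, Matrix.diagonal_apply_eq]
  rw [Finset.sum_congr rfl fun x _ => this x, Finset.sum_boole]
  rw [show (Finset.univ.filter fun x : Fin N → Fin 2 => cnt x = Kp).card = N.choose Kp
    from card_shell N Kp]
  norm_num

lemma shellP_idem (N Kp : ℕ) : shellP N Kp * shellP N Kp = shellP N Kp := by
  rw [shellP_eq_diagonal, Matrix.diagonal_mul_diagonal]
  ext x y
  rcases eq_or_ne x y with h | h
  · subst h
    simp only [Matrix.diagonal_apply_eq]
    split_ifs <;> norm_num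
  · simp [Matrix.diagonal_apply_ne _ h]

lemma exists_shell {N Kp : ℕ} (hK : Kp ≤ N) : ∃ x : Fin N → Fin 2, cnt x = Kp := by
  classical
  obtain ⟨t, -, ht⟩ := Finset.exists_subset_card_eq (s := (Finset.univ : Finset (Fin N)))
    (n := Kp) (by simpa using hK)
  refine ⟨fun n => if n ∈ t then 1 else 0, ?_⟩
  unfold cnt
  rw [show (Finset.univ.filter fun n => (if n ∈ t then (1:Fin 2) else 0) = 1) = t by
    ext n; simp only [Finset.mem_filter, Finset.mem_univ, true_and]; split <;> simp_all]
  exact ht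

set_option maxHeartbeats 1000000 in
lemma W_entry (r : ℝ) (N Kp : ℕ) (x y : Fin N → Fin 2) :
    ∑ μ : Fin N → Fin 4, Matrix.trace (ampR r N Kp μ) * ampR r N Kp μ x y
      = if cnt x = Kp ∧ cnt y = Kp then
          ∑ z ∈ Sh N Kp, ∏ n, ∑ a : Fin 4, ampQ r a (z n) (z n) * ampQ r a (x n) (y n)
        else 0 := by
  by_cases h : cnt x = Kp ∧ cnt y = Kp
  · simp only [trace_ampR, ampR_apply, if_pos h]
    calc ∑ μ : Fin N → Fin 4,
          (∑ z ∈ Sh N Kp, ∏ n, ampQ r (μ n) (z n) (z n)) * ∏ n, ampQ r (μ n) (x n) (y n)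
        = ∑ μ : Fin N → Fin 4, ∑ z ∈ Sh N Kp,
            (∏ n, ampQ r (μ n) (z n) (z n)) * ∏ n, ampQ r (μ n) (x n) (y n) :=
          Finset.sum_congr rfl fun μ _ => Finset.sum_mul _ _ _
      _ = ∑ z ∈ Sh N Kp, ∑ μ : Fin N → Fin 4,
            (∏ n, ampQ r (μ n) (z n) (z n)) * ∏ n, ampQ r (μ n) (x n) (y n) :=
          Finset.sum_comm
      _ = ∑ z ∈ Sh N Kp, ∑ μ : Fin N → Fin 4,
            ∏ n, (ampQ r (μ n) (z n) (z n) * ampQ r (μ n) (x n) (y n)) :=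
          Finset.sum_congr rfl fun z _ => Finset.sum_congr rfl fun μ _ =>
            (Finset.prod_mul_distrib).symm
      _ = ∑ z ∈ Sh N Kp, ∏ n, ∑ a : Fin 4, ampQ r a (z n) (z n) * ampQ r a (x n) (y n) :=
          Finset.sum_congr rfl fun z _ => by
            rw [Fintype.prod_sum (κ := fun _ : Fin N => Fin 4)
              (f := fun n a => ampQ r a (z n) (z n) * ampQ r a (x n) (y n))]
  · simp only [ampR_apply, if_neg h, mul_zero, Finset.sum_const_zero]

lemma shellP_offdiag {N Kp : ℕ} {x y : Fin N → Fin 2} (h : ¬(cnt x = Kp ∧ cnt y = Kp)) :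
    shellP N Kp x y = 0 := by
  rw [shellP_eq_diagonal]
  rcases eq_or_ne x y with rfl | hxy
  · rw [Matrix.diagonal_apply_eq]
    simp only [and_self] at h
    simp [h]
  · exact Matrix.diagonal_apply_ne _ hxy

lemma W_eq (r : ℝ) (hr0 : 0 ≤ r) (hr1 : r ≤ 1) (N Kp : ℕ) (hK : Kp ≤ N) :
    ∃ w : ℝ, ∑ μ : Fin N → Fin 4, Matrix.trace (ampR r N Kp μ) • ampR r N Kp μ
      = ((w : ℝ) : ℂ) • shellP N Kp := by
  classical
  obtain ⟨x₀, hx₀⟩ := exists_shell hK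
  refine ⟨∑ z ∈ Sh N Kp, ∏ n, (1 + dd r (z n) * dd r (x₀ n))/2, ?_⟩
  ext x y
  rw [Matrix.sum_apply]
  simp only [Matrix.smul_apply, smul_eq_mul]
  rw [W_entry r N Kp x y]
  by_cases h : cnt x = Kp ∧ cnt y = Kp
  · rw [if_pos h]
    rcases eq_or_ne x y with rfl | hxy
    · have hsum : ∀ z : Fin N → Fin 2,
          (∏ n, ∑ a : Fin 4, ampQ r a (z n) (z n) * ampQ r a (x n) (x n))
          = (((∏ n, (1 + dd r (z n) * dd r (x n))/2 : ℝ)) : ℂ) := by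
        intro z
        rw [Finset.prod_congr rfl fun n (_ : n ∈ Finset.univ) =>
          (sumA r hr0 hr1 (z n) (x n) (x n)).trans (if_pos rfl)]
        push_cast
        rfl
      rw [Finset.sum_congr rfl fun z _ => hsum z]
      rw [show shellP N Kp x x = 1 by
        rw [shellP_eq_diagonal, Matrix.diagonal_apply_eq]; simp [h.1]]
      rw [mul_one, ← Complex.ofReal_sum]
      exact congrArg _ (const_on_shell (fun zb xb => (1 + dd r zb * dd r xb)/2) x x₀ h.1 hx₀)
    · obtain ⟨n₀, hn₀⟩ := Function.ne_iff.1 hxy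
      rw [show shellP N Kp x y = 0 by
        rw [shellP_eq_diagonal]; exact Matrix.diagonal_apply_ne _ hxy, mul_zero]
      refine Finset.sum_eq_zero fun z _ => ?_
      refine Finset.prod_eq_zero (Finset.mem_univ n₀) ?_
      rw [sumA r hr0 hr1 (z n₀) (x n₀) (y n₀), if_neg hn₀]
  · rw [if_neg h, shellP_offdiag h, mul_zero]

lemma mulR_apply (r : ℝ) (N Kp : ℕ) (μ : Fin N → Fin 4) (x y : Fin N → Fin 2) :
    (ampR r N Kp μ * ampR r N Kp μ) x y
      = if cnt x = Kp ∧ cnt y = Kp then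
          ∑ z ∈ Sh N Kp, (∏ n, ampQ r (μ n) (x n) (z n)) * ∏ n, ampQ r (μ n) (z n) (y n)
        else 0 := by
  rw [Matrix.mul_apply]
  by_cases h : cnt x = Kp ∧ cnt y = Kp
  · rw [if_pos h]
    have hterm : ∀ z, ampR r N Kp μ x z * ampR r N Kp μ z y
        = if cnt z = Kp then
            (∏ n, ampQ r (μ n) (x n) (z n)) * ∏ n, ampQ r (μ n) (z n) (y n) else 0 := by
      intro z
      rw [ampR_apply, ampR_apply]
      by_cases hz : cnt z = Kp
      · simp [h.1, h.2, hz]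
      · simp [hz]
    rw [Finset.sum_congr rfl fun z (_ : z ∈ Finset.univ) => hterm z, Sh, ← Finset.sum_filter]
  · rw [if_neg h]
    refine Finset.sum_eq_zero fun z _ => ?_
    rw [ampR_apply, ampR_apply]
    by_cases hz : cnt z = Kp
    · rcases not_and_or.1 h with h1 | h1
      · rw [if_neg (by tauto), zero_mul]
      · rw [if_neg (by tauto : ¬(cnt z = Kp ∧ cnt y = Kp)), mul_zero]
    · rw [if_neg (by tauto), zero_mul]

set_option maxHeartbeats 1000000 in
lemma V_entry (r : ℝ) (N Kp : ℕ) (x y : Fin N → Fin 2) :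
    ∑ μ : Fin N → Fin 4, (ampR r N Kp μ * ampR r N Kp μ) x y
      = if cnt x = Kp ∧ cnt y = Kp then
          ∑ z ∈ Sh N Kp, ∏ n, ∑ a : Fin 4, ampQ r a (x n) (z n) * ampQ r a (z n) (y n)
        else 0 := by
  by_cases h : cnt x = Kp ∧ cnt y = Kp
  · simp only [mulR_apply, if_pos h]
    calc ∑ μ : Fin N → Fin 4, ∑ z ∈ Sh N Kp,
            (∏ n, ampQ r (μ n) (x n) (z n)) * ∏ n, ampQ r (μ n) (z n) (y n)
        = ∑ z ∈ Sh N Kp, ∑ μ : Fin N → Fin 4,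
            (∏ n, ampQ r (μ n) (x n) (z n)) * ∏ n, ampQ r (μ n) (z n) (y n) :=
          Finset.sum_comm
      _ = ∑ z ∈ Sh N Kp, ∑ μ : Fin N → Fin 4,
            ∏ n, (ampQ r (μ n) (x n) (z n) * ampQ r (μ n) (z n) (y n)) :=
          Finset.sum_congr rfl fun z _ => Finset.sum_congr rfl fun μ _ =>
            (Finset.prod_mul_distrib).symm
      _ = ∑ z ∈ Sh N Kp, ∏ n, ∑ a : Fin 4, ampQ r a (x n) (z n) * ampQ r a (z n) (y n) :=
          Finset.sum_congr rfl fun z _ => by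
            rw [Fintype.prod_sum (κ := fun _ : Fin N => Fin 4)
              (f := fun n a => ampQ r a (x n) (z n) * ampQ r a (z n) (y n))]
  · simp only [mulR_apply, if_neg h, Finset.sum_const_zero]

lemma V_eq (r : ℝ) (hr0 : 0 ≤ r) (hr1 : r ≤ 1) (N Kp : ℕ) (hK : Kp ≤ N) :
    ∃ v : ℝ, ∑ μ : Fin N → Fin 4, ampR r N Kp μ * ampR r N Kp μ
      = ((v : ℝ) : ℂ) • shellP N Kp := by
  classical
  obtain ⟨x₀, hx₀⟩ := exists_shell hK
  refine ⟨∑ z ∈ Sh N Kp, ∏ n, gg r (x₀ n) (z n), ?_⟩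
  ext x y
  rw [Matrix.sum_apply]
  rw [V_entry r N Kp x y]
  simp only [Matrix.smul_apply, smul_eq_mul]
  by_cases h : cnt x = Kp ∧ cnt y = Kp
  · rw [if_pos h]
    rcases eq_or_ne x y with rfl | hxy
    · have hsum : ∀ z : Fin N → Fin 2,
          (∏ n, ∑ a : Fin 4, ampQ r a (x n) (z n) * ampQ r a (z n) (x n))
          = (((∏ n, gg r (x n) (z n) : ℝ)) : ℂ) := by
        intro z
        rw [Finset.prod_congr rfl fun n (_ : n ∈ Finset.univ) =>
          (sumB r hr0 hr1 (x n) (z n) (x n)).trans (if_pos rfl)]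
        push_cast
        rfl
      rw [Finset.sum_congr rfl fun z _ => hsum z]
      rw [show shellP N Kp x x = 1 by
        rw [shellP_eq_diagonal, Matrix.diagonal_apply_eq]; simp [h.1]]
      rw [mul_one, ← Complex.ofReal_sum]
      exact congrArg _ (const_on_shell (fun zb xb => gg r xb zb) x x₀ h.1 hx₀)
    · obtain ⟨n₀, hn₀⟩ := Function.ne_iff.1 hxy
      rw [show shellP N Kp x y = 0 by
        rw [shellP_eq_diagonal]; exact Matrix.diagonal_apply_ne _ hxy, mul_zero]
      refine Finset.sum_eq_zero fun z _ => ?_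
      refine Finset.prod_eq_zero (Finset.mem_univ n₀) ?_
      rw [sumB r hr0 hr1 (x n₀) (z n₀) (y n₀), if_neg hn₀]
  · rw [if_neg h, shellP_offdiag h, mul_zero]

lemma trace_ampR_real (r : ℝ) (hr0 : 0 ≤ r) (hr1 : r ≤ 1) (N Kp : ℕ) (μ : Fin N → Fin 4) :
    Matrix.trace (ampR r N Kp μ) = (((Matrix.trace (ampR r N Kp μ)).re : ℝ) : ℂ) := by
  have h : Matrix.trace (ampR r N Kp μ)
      = ((∑ x ∈ Sh N Kp, ∏ n, qdiag r (μ n) (x n) : ℝ) : ℂ) := by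
    rw [trace_ampR, Complex.ofReal_sum]
    refine Finset.sum_congr rfl fun x _ => ?_
    rw [Complex.ofReal_prod]
    exact Finset.prod_congr rfl fun n _ => ampQ_diag r hr0 hr1 (μ n) (x n)
  rw [h, Complex.ofReal_re]


/-- In the amplitude-damping setup, β₂ = α₁²/d_S, β₃ = α₁α₂/d_S and β₄ = α₂²/d_S,
where d_S = C(N,K). -/
theorem amp_beta_formulas (r : ℝ) (hr0 : 0 ≤ r) (hr1 : r ≤ 1)
    (N Kp : ℕ) (hN : 1 ≤ N) (hK : Kp ≤ N) :
    (∑ μ : Fin N → Fin 4, ∑ ν : Fin N → Fin 4,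
        rtr (ampR r N Kp μ * ampR r N Kp ν) * rtr (ampR r N Kp μ) * rtr (ampR r N Kp ν)) =
          (∑ μ : Fin N → Fin 4, (rtr (ampR r N Kp μ)) ^ 2) ^ 2 / (N.choose Kp : ℝ) ∧
      (∑ μ : Fin N → Fin 4, ∑ ν : Fin N → Fin 4,
        rtr (ampR r N Kp μ * (ampR r N Kp ν * ampR r N Kp ν)) * rtr (ampR r N Kp μ)) =
          (∑ μ : Fin N → Fin 4, (rtr (ampR r N Kp μ)) ^ 2) *
            (∑ μ : Fin N → Fin 4, rtr (ampR r N Kp μ * ampR r N Kp μ)) / (N.choose Kp : ℝ) ∧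
      (∑ μ : Fin N → Fin 4, ∑ ν : Fin N → Fin 4,
        rtr (ampR r N Kp μ * ampR r N Kp μ * (ampR r N Kp ν * ampR r N Kp ν))) =
          (∑ μ : Fin N → Fin 4, rtr (ampR r N Kp μ * ampR r N Kp μ)) ^ 2 / (N.choose Kp : ℝ) := by
  classical
  obtain ⟨w, HW⟩ := W_eq r hr0 hr1 N Kp hK
  obtain ⟨v, HV⟩ := V_eq r hr0 hr1 N Kp hK
  set R := ampR r N Kp with hR
  set P := shellP N Kp with hP
  have hd : ((N.choose Kp : ℝ) : ℂ) = Matrix.trace P := (trace_shellP N Kp).symm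
  have hd0 : (N.choose Kp : ℝ) ≠ 0 := by
    exact_mod_cast (Nat.choose_pos hK).ne'
  set tt : (Fin N → Fin 4) → ℝ := fun μ => (Matrix.trace (R μ)).re with htt
  have hreal : ∀ μ, Matrix.trace (R μ) = ((tt μ : ℝ) : ℂ) := fun μ =>
    trace_ampR_real r hr0 hr1 N Kp μ
  -- trace of W
  have hPP : P * P = P := shellP_idem N Kp
  have htrW : Matrix.trace (∑ μ : Fin N → Fin 4, Matrix.trace (R μ) • R μ)
      = ∑ μ : Fin N → Fin 4, Matrix.trace (R μ) * Matrix.trace (R μ) := by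
    rw [Matrix.trace_sum]
    exact Finset.sum_congr rfl fun μ _ => by rw [Matrix.trace_smul, smul_eq_mul]
  -- α₁ real identity
  have A1 : ∑ μ : Fin N → Fin 4, (tt μ) ^ 2 = w * (N.choose Kp : ℝ) := by
    have h1 : ((∑ μ : Fin N → Fin 4, (tt μ) ^ 2 : ℝ) : ℂ)
        = ((w * (N.choose Kp : ℝ) : ℝ) : ℂ) := by
      push_cast
      calc ∑ μ : Fin N → Fin 4, ((tt μ : ℝ) : ℂ) ^ 2
          = ∑ μ : Fin N → Fin 4, Matrix.trace (R μ) * Matrix.trace (R μ) := by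
            refine Finset.sum_congr rfl fun μ _ => ?_
            rw [← hreal μ]; ring
        _ = Matrix.trace (∑ μ : Fin N → Fin 4, Matrix.trace (R μ) • R μ) := htrW.symm
        _ = ((w:ℝ):ℂ) * ((N.choose Kp : ℝ):ℂ) := by
            rw [HW, Matrix.trace_smul, ← hd, smul_eq_mul]
    exact_mod_cast h1
  -- α₂ real identity
  have A2 : ∑ μ : Fin N → Fin 4, rtr (R μ * R μ) = v * (N.choose Kp : ℝ) := by
    have h1 : (∑ μ : Fin N → Fin 4, Matrix.trace (R μ * R μ))
        = ((v:ℝ):ℂ) * ((N.choose Kp : ℝ):ℂ) := by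
      rw [← Matrix.trace_sum, HV, Matrix.trace_smul, ← hd, smul_eq_mul]
    have h2 := congrArg Complex.re h1
    rw [Complex.re_sum] at h2
    simpa [rtr] using h2
  -- β₂
  have B2 : (∑ μ : Fin N → Fin 4, ∑ ν : Fin N → Fin 4,
      rtr (R μ * R ν) * rtr (R μ) * rtr (R ν)) = w ^ 2 * (N.choose Kp : ℝ) := by
    have h1 : (∑ μ : Fin N → Fin 4, ∑ ν : Fin N → Fin 4,
        Matrix.trace (R μ * R ν) * ((tt μ : ℝ):ℂ) * ((tt ν : ℝ):ℂ))
        = ((w:ℝ):ℂ)^2 * ((N.choose Kp : ℝ):ℂ) := by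
      calc ∑ μ : Fin N → Fin 4, ∑ ν : Fin N → Fin 4,
            Matrix.trace (R μ * R ν) * ((tt μ : ℝ):ℂ) * ((tt ν : ℝ):ℂ)
          = ∑ μ : Fin N → Fin 4, ∑ ν : Fin N → Fin 4,
            Matrix.trace ((Matrix.trace (R μ) • R μ) * (Matrix.trace (R ν) • R ν)) := by
            refine Finset.sum_congr rfl fun μ _ => Finset.sum_congr rfl fun ν _ => ?_
            rw [Matrix.smul_mul, Matrix.mul_smul, Matrix.trace_smul, Matrix.trace_smul,
              hreal μ, hreal ν, smul_eq_mul, smul_eq_mul]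
            ring
        _ = Matrix.trace ((∑ μ : Fin N → Fin 4, Matrix.trace (R μ) • R μ)
              * (∑ ν : Fin N → Fin 4, Matrix.trace (R ν) • R ν)) := by
            rw [Finset.sum_mul_sum, Matrix.trace_sum]
            exact Finset.sum_congr rfl fun μ _ => (Matrix.trace_sum Finset.univ
              (fun ν => (Matrix.trace (R μ) • R μ) * (Matrix.trace (R ν) • R ν))).symm
        _ = ((w:ℝ):ℂ)^2 * ((N.choose Kp : ℝ):ℂ) := by
            rw [HW, Matrix.smul_mul, Matrix.mul_smul, hPP, Matrix.trace_smul,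
              Matrix.trace_smul, ← hd, smul_eq_mul, smul_eq_mul]
            ring
    have h2 := congrArg Complex.re h1
    rw [Complex.re_sum] at h2
    have h3 : ∀ μ, (∑ ν : Fin N → Fin 4,
        Matrix.trace (R μ * R ν) * ((tt μ : ℝ):ℂ) * ((tt ν : ℝ):ℂ)).re
        = ∑ ν : Fin N → Fin 4, rtr (R μ * R ν) * rtr (R μ) * rtr (R ν) := by
      intro μ
      rw [Complex.re_sum]
      refine Finset.sum_congr rfl fun ν _ => ?_
      simp [rtr, Complex.mul_re, Complex.ofReal_re, Complex.ofReal_im, htt]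
    rw [Finset.sum_congr rfl fun μ _ => h3 μ] at h2
    rw [h2, show ((w:ℝ):ℂ)^2 * ((N.choose Kp : ℝ):ℂ)
      = (((w^2 * (N.choose Kp : ℝ)) : ℝ) : ℂ) by push_cast; ring, Complex.ofReal_re]
  -- β₃
  have B3 : (∑ μ : Fin N → Fin 4, ∑ ν : Fin N → Fin 4,
      rtr (R μ * (R ν * R ν)) * rtr (R μ)) = w * v * (N.choose Kp : ℝ) := by
    have h1 : (∑ μ : Fin N → Fin 4, ∑ ν : Fin N → Fin 4,
        Matrix.trace (R μ * (R ν * R ν)) * ((tt μ : ℝ):ℂ))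
        = ((w:ℝ):ℂ) * ((v:ℝ):ℂ) * ((N.choose Kp : ℝ):ℂ) := by
      calc ∑ μ : Fin N → Fin 4, ∑ ν : Fin N → Fin 4,
            Matrix.trace (R μ * (R ν * R ν)) * ((tt μ : ℝ):ℂ)
          = ∑ μ : Fin N → Fin 4, ∑ ν : Fin N → Fin 4,
            Matrix.trace ((Matrix.trace (R μ) • R μ) * (R ν * R ν)) := by
            refine Finset.sum_congr rfl fun μ _ => Finset.sum_congr rfl fun ν _ => ?_
            rw [Matrix.smul_mul, Matrix.trace_smul, hreal μ, smul_eq_mul]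
            ring
        _ = Matrix.trace ((∑ μ : Fin N → Fin 4, Matrix.trace (R μ) • R μ)
              * (∑ ν : Fin N → Fin 4, R ν * R ν)) := by
            rw [Finset.sum_mul_sum, Matrix.trace_sum]
            exact Finset.sum_congr rfl fun μ _ => (Matrix.trace_sum Finset.univ
              (fun ν => (Matrix.trace (R μ) • R μ) * (R ν * R ν))).symm
        _ = ((w:ℝ):ℂ) * ((v:ℝ):ℂ) * ((N.choose Kp : ℝ):ℂ) := by
            rw [HW, HV, Matrix.smul_mul, Matrix.mul_smul, hPP, Matrix.trace_smul,
              Matrix.trace_smul, ← hd, smul_eq_mul, smul_eq_mul]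
            ring
    have h2 := congrArg Complex.re h1
    rw [Complex.re_sum] at h2
    have h3 : ∀ μ, (∑ ν : Fin N → Fin 4,
        Matrix.trace (R μ * (R ν * R ν)) * ((tt μ : ℝ):ℂ)).re
        = ∑ ν : Fin N → Fin 4, rtr (R μ * (R ν * R ν)) * rtr (R μ) := by
      intro μ
      rw [Complex.re_sum]
      refine Finset.sum_congr rfl fun ν _ => ?_
      simp [rtr, Complex.mul_re, Complex.ofReal_re, Complex.ofReal_im, htt]
    rw [Finset.sum_congr rfl fun μ _ => h3 μ] at h2
    rw [h2, show ((w:ℝ):ℂ) * ((v:ℝ):ℂ) * ((N.choose Kp : ℝ):ℂ)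
      = (((w * v * (N.choose Kp : ℝ)) : ℝ) : ℂ) by push_cast; ring, Complex.ofReal_re]
  -- β₄
  have B4 : (∑ μ : Fin N → Fin 4, ∑ ν : Fin N → Fin 4,
      rtr (R μ * R μ * (R ν * R ν))) = v ^ 2 * (N.choose Kp : ℝ) := by
    have h1 : (∑ μ : Fin N → Fin 4, ∑ ν : Fin N → Fin 4,
        Matrix.trace (R μ * R μ * (R ν * R ν)))
        = ((v:ℝ):ℂ)^2 * ((N.choose Kp : ℝ):ℂ) := by
      calc ∑ μ : Fin N → Fin 4, ∑ ν : Fin N → Fin 4,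
            Matrix.trace (R μ * R μ * (R ν * R ν))
          = Matrix.trace ((∑ μ : Fin N → Fin 4, R μ * R μ)
              * (∑ ν : Fin N → Fin 4, R ν * R ν)) := by
            rw [Finset.sum_mul_sum, Matrix.trace_sum]
            exact Finset.sum_congr rfl fun μ _ => (Matrix.trace_sum Finset.univ
              (fun ν => (R μ * R μ) * (R ν * R ν))).symm
        _ = ((v:ℝ):ℂ)^2 * ((N.choose Kp : ℝ):ℂ) := by
            rw [HV, Matrix.smul_mul, Matrix.mul_smul, hPP, Matrix.trace_smul,
              Matrix.trace_smul, ← hd, smul_eq_mul, smul_eq_mul]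
            ring
    have h2 := congrArg Complex.re h1
    rw [Complex.re_sum] at h2
    have h3 : ∀ μ, (∑ ν : Fin N → Fin 4,
        Matrix.trace (R μ * R μ * (R ν * R ν))).re
        = ∑ ν : Fin N → Fin 4, rtr (R μ * R μ * (R ν * R ν)) := by
      intro μ; rw [Complex.re_sum]; rfl
    rw [Finset.sum_congr rfl fun μ _ => h3 μ] at h2
    rw [h2, show ((v:ℝ):ℂ)^2 * ((N.choose Kp : ℝ):ℂ)
      = (((v^2 * (N.choose Kp : ℝ)) : ℝ) : ℂ) by push_cast; ring, Complex.ofReal_re]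
  have A1' : (∑ μ : Fin N → Fin 4, (rtr (R μ)) ^ 2) = w * (N.choose Kp : ℝ) := A1
  refine ⟨?_, ?_, ?_⟩
  · rw [B2, A1']
    field_simp
  · rw [B3, A1', A2]
    field_simp
  · rw [B4, A2]
    field_simp
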